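/- For every integer r ≥ 1, the derivative of the function y ↦ binom(y, r−1) evaluated at y = −1 equals (−1)^r H_{r−1}. -/

import Mathlib

/-- The `n`-th harmonic number `H_n = ∑_{k=1}^n 1/k` (with `H_0 = 0`), as a real number. -/
noncomputable def harmonicR (n : ℕ) : ℝ := ∑ k ∈ Finset.range n, (1 : ℝ) / (k + 1)

/-- The generalized binomial coefficient `binom(y, k) = y(y−1)⋯(y−k+1)/k!`, for real `y`. -/
noncomputable def binomR (y : ℝ) (k : ℕ) : ℝ := (∏ i ∈ Finset.range k, (y - (i : ℝ))) / (k.factorial : ℝ)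

lemma prod_neg_one_sub (k : ℕ) :
    ∏ j ∈ Finset.range k, ((-1 : ℝ) - j) = (-1 : ℝ) ^ k * k.factorial := by
  induction k with
  | zero => simp
  | succ n ih =>
    rw [Finset.prod_range_succ, ih, Nat.factorial_succ, pow_succ]
    push_cast
    ring

/-- For every integer `r ≥ 1`, the derivative of `y ↦ binom(y, r−1)` at `y = −1`
equals `(−1)^r H_{r−1}`. -/
theorem deriv_binom_at_neg_one (r : ℕ) (hr : 1 ≤ r) :
    deriv (fun y : ℝ => binomR y (r - 1)) (-1) = (-1 : ℝ) ^ r * harmonicR (r - 1) := by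
  set k := r - 1 with hk
  have hrk : r = k + 1 := (Nat.succ_pred_eq_of_pos hr).symm
  have hfact : (k.factorial : ℝ) ≠ 0 := Nat.cast_ne_zero.mpr k.factorial_ne_zero
  have hd : HasDerivAt (fun y : ℝ => binomR y k)
      ((∑ i ∈ Finset.range k, (∏ j ∈ (Finset.range k).erase i, ((-1 : ℝ) - j)) • (1 : ℝ))
        / (k.factorial : ℝ)) (-1) := by
    unfold binomR
    exact (HasDerivAt.fun_finsetProd (fun i _ => (hasDerivAt_id _).sub_const _)).div_const _
  rw [hd.deriv]
  have hsum : ∀ i ∈ Finset.range k,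
      (∏ j ∈ (Finset.range k).erase i, ((-1 : ℝ) - j)) • (1 : ℝ)
        = (-1 : ℝ) ^ (k + 1) * k.factorial * (1 / (i + 1)) := by
    intro i hi
    have h1 : ((-1 : ℝ) - i) * ∏ j ∈ (Finset.range k).erase i, ((-1 : ℝ) - j)
        = ∏ j ∈ Finset.range k, ((-1 : ℝ) - j) := Finset.mul_prod_erase _ (fun j : ℕ => (-1 : ℝ) - j) hi
    have hne : ((-1 : ℝ) - i) ≠ 0 := by
      have : (0 : ℝ) ≤ i := Nat.cast_nonneg i
      nlinarith
    have h2 : ∏ j ∈ (Finset.range k).erase i, ((-1 : ℝ) - j)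
        = ((-1 : ℝ) ^ k * k.factorial) / ((-1 : ℝ) - i) := by
      rw [← prod_neg_one_sub k, ← h1]
      field_simp
    rw [smul_eq_mul, mul_one, h2, show ((-1 : ℝ) - i) = -((i : ℝ) + 1) by ring,
      div_neg, pow_succ]
    have h3 : ((i : ℝ) + 1) ≠ 0 := by positivity
    field_simp
  rw [Finset.sum_congr rfl hsum, ← Finset.mul_sum]
  unfold harmonicR
  rw [hrk]
  rw [mul_div_right_comm, mul_div_cancel_right₀ _ hfact]
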